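/- Define on the set D = ℤ × ℤ the operations (k₁, k₂) + (t₁, t₂) = (k₁ + t₁, k₂ + t₂) and (k₁, k₂)·(t₁, t₂) = (k₁ + t₁, k₁t₁ + k₂ + t₂). Then D with these operations is a left brace, D is generated as a brace by one element, and D³ = ⟨0⟩ = D^{(3)}. -/

import Mathlib

/-- A left brace: `(A, +)` is an abelian group, `(A, *)` is a group, and
`a * (b + c) = a * b + a * c - a` for all `a b c`. -/
class LeftBrace (A : Type*) extends AddCommGroup A, Group A where
  mul_add_eq : ∀ a b c : A, a * (b + c) = a * b + a * c - a

namespace LeftBrace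

variable {A : Type*} [LeftBrace A]

/-- The star operation of a left brace: `a ⋆ b = a * b - a - b`. -/
def star (a b : A) : A := a * b - a - b

/-- `K ⋆ L`: the subgroup of the additive group of `A` generated by all
`x ⋆ y` with `x ∈ K`, `y ∈ L`. -/
def setStar (K L : Set A) : AddSubgroup A :=
  AddSubgroup.closure (Set.image2 star K L)

/-- A subbrace of `A`: a subset that is simultaneously a subgroup of the
additive group of `A` and a subgroup of the multiplicative group of `A`. -/
def IsSubbrace (S : Set A) : Prop :=
  (0 : A) ∈ S ∧ (∀ x ∈ S, ∀ y ∈ S, x + y ∈ S) ∧ (∀ x ∈ S, -x ∈ S) ∧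
    (1 : A) ∈ S ∧ (∀ x ∈ S, ∀ y ∈ S, x * y ∈ S) ∧ (∀ x ∈ S, x⁻¹ ∈ S)

/-- A left ideal of `A`: a subbrace `S` with `a ⋆ b ∈ S` for all `a ∈ A`, `b ∈ S`. -/
def IsLeftIdeal (S : Set A) : Prop :=
  IsSubbrace S ∧ ∀ a : A, ∀ b ∈ S, star a b ∈ S

/-- An ideal of `A`: a subbrace `S` with `a ⋆ z ∈ S` and `z ⋆ a ∈ S`
for all `a ∈ A`, `z ∈ S`. -/
def IsIdeal (S : Set A) : Prop :=
  IsSubbrace S ∧ ∀ a : A, ∀ z ∈ S, star a z ∈ S ∧ star z a ∈ S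

/-- The left series of the brace `A`, with the indexing shifted by one:
`leftSeriesN A 0 = A¹ = A` and `leftSeriesN A n = Aⁿ⁺¹ = A ⋆ Aⁿ`.
In particular `leftSeriesN A 1 = A²` and `leftSeriesN A 2 = A³`. -/
def leftSeriesN (A : Type*) [LeftBrace A] : ℕ → AddSubgroup A
  | 0 => ⊤
  | n + 1 => setStar Set.univ ((leftSeriesN A n : AddSubgroup A) : Set A)

/-- The right series of the brace `A`, with the indexing shifted by one:
`rightSeriesN A 0 = A⁽¹⁾ = A` and `rightSeriesN A n = A⁽ⁿ⁺¹⁾ = A⁽ⁿ⁾ ⋆ A`.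
In particular `rightSeriesN A 2 = A⁽³⁾` and `rightSeriesN A 3 = A⁽⁴⁾`. -/
def rightSeriesN (A : Type*) [LeftBrace A] : ℕ → AddSubgroup A
  | 0 => ⊤
  | n + 1 => setStar ((rightSeriesN A n : AddSubgroup A) : Set A) Set.univ

end LeftBrace

open LeftBrace

/-- The underlying set `D = ℤ × ℤ` (as a type synonym, so that the brace
multiplication below does not clash with the componentwise product). -/
def TwoBrace : Type := ℤ × ℤ

namespace TwoBrace

/-- The addition of `D` is componentwise: `(k₁,k₂)+(t₁,t₂) = (k₁+t₁, k₂+t₂)`. -/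
instance : AddCommGroup TwoBrace := inferInstanceAs (AddCommGroup (ℤ × ℤ))

/-- The multiplication of `D`: `(k₁,k₂)·(t₁,t₂) = (k₁+t₁, k₁t₁+k₂+t₂)`. -/
instance instGroup : Group TwoBrace where
  mul x y := ((x.1 + y.1, x.1 * y.1 + x.2 + y.2) : ℤ × ℤ)
  one := ((0, 0) : ℤ × ℤ)
  inv x := ((-x.1, x.1 ^ 2 - x.2) : ℤ × ℤ)
  mul_assoc a b c := show
      ((a.1 + b.1 + c.1, (a.1 + b.1) * c.1 + (a.1 * b.1 + a.2 + b.2) + c.2) : ℤ × ℤ)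
      = (a.1 + (b.1 + c.1), a.1 * (b.1 + c.1) + a.2 + (b.1 * c.1 + b.2 + c.2)) by
    refine Prod.ext ?_ ?_ <;> dsimp <;> ring
  one_mul a := show ((0 + a.1, 0 * a.1 + 0 + a.2) : ℤ × ℤ) = (a.1, a.2) by
    refine Prod.ext ?_ ?_ <;> dsimp <;> ring
  mul_one a := show ((a.1 + 0, a.1 * 0 + a.2 + 0) : ℤ × ℤ) = (a.1, a.2) by
    refine Prod.ext ?_ ?_ <;> dsimp <;> ring
  inv_mul_cancel a := show
      ((-a.1 + a.1, -a.1 * a.1 + (a.1 ^ 2 - a.2) + a.2) : ℤ × ℤ) = ((0, 0) : ℤ × ℤ) by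
    refine Prod.ext ?_ ?_ <;> dsimp <;> ring

/-- `D` with these two operations is a left brace. -/
instance instLeftBrace : LeftBrace TwoBrace :=
  { (inferInstance : AddCommGroup TwoBrace), (inferInstance : Group TwoBrace) with
    mul_add_eq := fun a b c => show
        ((a.1 + (b.1 + c.1), a.1 * (b.1 + c.1) + a.2 + (b.2 + c.2)) : ℤ × ℤ)
        = ((a.1 + b.1) + (a.1 + c.1) - a.1,
            (a.1 * b.1 + a.2 + b.2) + (a.1 * c.1 + a.2 + c.2) - a.2) by
      refine Prod.ext ?_ ?_ <;> dsimp <;> ring }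

end TwoBrace

section Aux

open TwoBrace

lemma TwoBrace.mul_def (x y : TwoBrace) :
    x * y = ((x.1 + y.1, x.1 * y.1 + x.2 + y.2) : ℤ × ℤ) := rfl

lemma TwoBrace.star_eq (a b : TwoBrace) :
    star a b = ((0, a.1 * b.1) : ℤ × ℤ) := by
  refine Prod.ext ?_ ?_
  · show a.1 + b.1 - a.1 - b.1 = 0
    ring
  · show a.1 * b.1 + a.2 + b.2 - a.2 - b.2 = a.1 * b.1
    ring

/-- The additive subgroup `{x | x.1 = 0}` of `TwoBrace`. -/
def TwoBrace.K : AddSubgroup TwoBrace where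
  carrier := {x : TwoBrace | x.1 = 0}
  zero_mem' := rfl
  add_mem' := by
    intro a b ha hb
    show a.1 + b.1 = 0
    simp [Set.mem_setOf_eq] at ha hb
    simp [ha, hb]
  neg_mem' := by
    intro a ha
    show -a.1 = 0
    simp [Set.mem_setOf_eq] at ha
    simp [ha]

lemma TwoBrace.leftSeriesN_one_le : leftSeriesN TwoBrace 1 ≤ TwoBrace.K := by
  show setStar _ _ ≤ _
  rw [setStar]
  apply AddSubgroup.closure_le (K := TwoBrace.K) |>.2
  rintro z ⟨a, -, b, -, rfl⟩
  show (star a b).1 = 0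
  rw [TwoBrace.star_eq]

lemma TwoBrace.rightSeriesN_one_le : rightSeriesN TwoBrace 1 ≤ TwoBrace.K := by
  show setStar _ _ ≤ _
  rw [setStar]
  apply AddSubgroup.closure_le (K := TwoBrace.K) |>.2
  rintro z ⟨a, -, b, -, rfl⟩
  show (star a b).1 = 0
  rw [TwoBrace.star_eq]

def TwoBrace.d : TwoBrace := ((1, 0) : ℤ × ℤ)

def TwoBrace.e : TwoBrace := ((0, 1) : ℤ × ℤ)

lemma TwoBrace.key : TwoBrace.d * TwoBrace.d + -(TwoBrace.d + TwoBrace.d) = TwoBrace.e := by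
  rw [TwoBrace.mul_def]
  refine Prod.ext ?_ ?_
  · show (1 : ℤ) + 1 + -(1 + 1) = 0
    ring
  · show (1 : ℤ) * 1 + 0 + 0 + -(0 + 0) = 1
    ring

lemma TwoBrace.decomp (x : TwoBrace) : x = x.1 • TwoBrace.d + x.2 • TwoBrace.e := by
  refine Prod.ext ?_ ?_
  · show x.1 = x.1 • (1 : ℤ) + x.2 • (0 : ℤ)
    simp
  · show x.2 = x.1 • (0 : ℤ) + x.2 • (1 : ℤ)
    simp

end Aux

/-- **Theorem B1, first part.** `D = ℤ × ℤ` with the operations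
`(k₁,k₂)+(t₁,t₂) = (k₁+t₁, k₂+t₂)` and `(k₁,k₂)·(t₁,t₂) = (k₁+t₁, k₁t₁+k₂+t₂)`
is a left brace (witnessed by the instance `TwoBrace.instLeftBrace` above, whose
operations are recorded in the first two conjuncts), `D` is generated as a brace
by one element, and `D³ = ⟨0⟩ = D⁽³⁾` (here `D³ = leftSeriesN TwoBrace 2` and
`D⁽³⁾ = rightSeriesN TwoBrace 2`). -/

theorem twoBrace_structure :
    (∀ x y : TwoBrace, x + y = ((x.1 + y.1, x.2 + y.2) : ℤ × ℤ)) ∧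
    (∀ x y : TwoBrace, x * y = ((x.1 + y.1, x.1 * y.1 + x.2 + y.2) : ℤ × ℤ)) ∧
    (∃ d : TwoBrace, ∀ S : Set TwoBrace, IsSubbrace S → d ∈ S → S = Set.univ) ∧
    leftSeriesN TwoBrace 2 = ⊥ ∧ rightSeriesN TwoBrace 2 = ⊥ := by
  refine ⟨fun x y => rfl, fun x y => rfl, ?_, ?_, ?_⟩
  · -- generated by d = (1, 0)
    refine ⟨TwoBrace.d, fun S hS hd => ?_⟩
    obtain ⟨h0, hadd, hneg, h1, hmul, hinv⟩ := hS
    let T : AddSubgroup TwoBrace :=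
      { carrier := S
        zero_mem' := h0
        add_mem' := fun ha hb => hadd _ ha _ hb
        neg_mem' := fun ha => hneg _ ha }
    have hdT : TwoBrace.d ∈ T := hd
    have he : TwoBrace.e ∈ T := by
      rw [← TwoBrace.key]
      exact T.add_mem (show _ ∈ S from hmul _ hd _ hd) (T.neg_mem (T.add_mem hdT hdT))
    ext x
    simp only [Set.mem_univ, iff_true]
    have hx := TwoBrace.decomp x
    rw [show (x ∈ S) = (x ∈ T) from rfl, hx]
    exact T.add_mem (T.zsmul_mem hdT _) (T.zsmul_mem he _)
  · -- leftSeriesN 2 = ⊥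
    refine le_antisymm ?_ bot_le
    show setStar _ _ ≤ ⊥
    rw [setStar]
    apply AddSubgroup.closure_le (K := ⊥) |>.2
    rintro z ⟨a, -, b, hb, rfl⟩
    have hb1 : b.1 = 0 := TwoBrace.leftSeriesN_one_le hb
    simp only [SetLike.mem_coe, AddSubgroup.mem_bot]
    rw [TwoBrace.star_eq, hb1]
    show ((0, a.1 * 0) : ℤ × ℤ) = (0 : TwoBrace)
    simp
    rfl
  · -- rightSeriesN 2 = ⊥
    refine le_antisymm ?_ bot_le
    show setStar _ _ ≤ ⊥
    rw [setStar]
    apply AddSubgroup.closure_le (K := ⊥) |>.2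
    rintro z ⟨a, ha, b, -, rfl⟩
    have ha1 : a.1 = 0 := TwoBrace.rightSeriesN_one_le ha
    simp only [SetLike.mem_coe, AddSubgroup.mem_bot]
    rw [TwoBrace.star_eq, ha1]
    show ((0, 0 * b.1) : ℤ × ℤ) = (0 : TwoBrace)
    simp
    rfl
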